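/- arXiv:1703.04459 — 3 statements merged into one kernel-verified Lean document; each statement's English description precedes it below -/
import Mathlib

section
/- For A ∈ ℝ^{n×n} with all eigenvalues having negative real part, the Lyapunov operator L_A(H) = AH + HA^T on symmetric matrices is invertible, and for every positive semidefinite Y there exists a unique positive semidefinite X with AX + XA^T = -Y, given by X = ∫₀^∞ e^{tA} Y e^{tA^T} dt. -/
open Matrix MeasureTheory

set_option maxHeartbeats 2000000
set_option synthInstance.maxHeartbeats 1000000

section LyapunovAux

open NormedSpace Filter Module Nat

variable {n : ℕ}

noncomputable def matCLM (𝕜 : Type*) [RCLike 𝕜] (n : ℕ) :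
    Matrix (Fin n) (Fin n) 𝕜 ≃ₐ[𝕜] ((Fin n → 𝕜) →L[𝕜] (Fin n → 𝕜)) :=
  AlgEquiv.ofLinearEquiv
    (Matrix.toLinAlgEquiv'.toLinearEquiv ≪≫ₗ LinearMap.toContinuousLinearMap)
    (by
      apply ContinuousLinearMap.coe_injective
      simp [LinearEquiv.trans_apply])
    (by
      intro x y
      apply ContinuousLinearMap.coe_injective
      simp [LinearEquiv.trans_apply])

theorem matCLM_apply {𝕜 : Type*} [RCLike 𝕜] (M : Matrix (Fin n) (Fin n) 𝕜) (v : Fin n → 𝕜) :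
    matCLM 𝕜 n M v = M.mulVec v := rfl

theorem matCLM_exp {𝕜 : Type*} [RCLike 𝕜] (M : Matrix (Fin n) (Fin n) 𝕜) :
    matCLM 𝕜 n (exp M) = exp (matCLM 𝕜 n M) := by
  letI : SeminormedRing (Matrix (Fin n) (Fin n) 𝕜) := Matrix.linftyOpSemiNormedRing
  letI : NormedRing (Matrix (Fin n) (Fin n) 𝕜) := Matrix.linftyOpNormedRing
  letI : NormedAlgebra 𝕜 (Matrix (Fin n) (Fin n) 𝕜) := Matrix.linftyOpNormedAlgebra
  letI : NormedAlgebra ℚ (Matrix (Fin n) (Fin n) 𝕜) := .restrictScalars ℚ 𝕜 _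
  haveI : @CompleteSpace _ (PseudoMetricSpace.toUniformSpace (α := Matrix (Fin n) (Fin n) 𝕜)) :=
    FiniteDimensional.complete 𝕜 _
  exact map_exp (matCLM 𝕜 n).toAlgHom
    (LinearMap.continuous_of_finiteDimensional (matCLM 𝕜 n).toLinearMap) M

theorem map_ofReal_exp (M : Matrix (Fin n) (Fin n) ℝ) :
    (exp M).map (Complex.ofReal ·) = exp (M.map (Complex.ofReal ·)) := by
  letI : NormedRing (Matrix (Fin n) (Fin n) ℝ) := Matrix.linftyOpNormedRing
  letI : NormedAlgebra ℝ (Matrix (Fin n) (Fin n) ℝ) := Matrix.linftyOpNormedAlgebra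
  letI : NormedRing (Matrix (Fin n) (Fin n) ℂ) := Matrix.linftyOpNormedRing
  letI : NormedAlgebra ℝ (Matrix (Fin n) (Fin n) ℂ) := Matrix.linftyOpNormedAlgebra
  letI : NormedAlgebra ℚ (Matrix (Fin n) (Fin n) ℝ) := .restrictScalars ℚ ℝ _
  have hc : Continuous (Complex.ofRealAm.mapMatrix (m := Fin n)) :=
    LinearMap.continuous_of_finiteDimensional
      ((Complex.ofRealAm.mapMatrix (m := Fin n)).toLinearMap)
  have := map_exp (Complex.ofRealAm.mapMatrix (m := Fin n)) hc M
  exact this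

theorem spec_exp (B : Matrix (Fin n) (Fin n) ℂ) {l : ℂ}
    (hl : l ∈ spectrum ℂ (exp B)) : ∃ μ ∈ spectrum ℂ B, l = Complex.exp μ := by
  letI : NormedRing (Matrix (Fin n) (Fin n) ℂ) := Matrix.linftyOpNormedRing
  letI : NormedAlgebra ℂ (Matrix (Fin n) (Fin n) ℂ) := Matrix.linftyOpNormedAlgebra
  set g : End ℂ (Fin n → ℂ) := Matrix.toLinAlgEquiv' (exp B) with hg
  set f : End ℂ (Fin n → ℂ) := Matrix.toLinAlgEquiv' B with hf
  have hl' : g.HasEigenvalue l := by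
    rw [End.hasEigenvalue_iff_mem_spectrum, AlgEquiv.spectrum_eq]
    exact hl
  set p := g.eigenspace l with hp
  haveI : Nontrivial p := Submodule.nontrivial_iff_ne_bot.mpr hl'
  have hfp : ∀ x ∈ p, f x ∈ p := by
    intro x hx
    rw [hp, End.mem_eigenspace_iff] at hx ⊢
    have hcomm : g * f = f * g := by
      rw [hg, hf, ← _root_.map_mul, ← _root_.map_mul]
      congr 1
      exact (Commute.refl B).exp_right.symm
    calc g (f x) = (g * f) x := rfl
    _ = f (g x) := by rw [hcomm]; rfl
    _ = l • f x := by rw [hx, _root_.map_smul]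
  obtain ⟨μ, hμ⟩ := End.exists_eigenvalue (f.restrict hfp)
  obtain ⟨w, hw⟩ := hμ.exists_hasEigenvector
  have hwne : (w : Fin n → ℂ) ≠ 0 := fun h => hw.2 (Subtype.coe_injective (by simpa using h))
  have hfw : f (w : Fin n → ℂ) = μ • (w : Fin n → ℂ) := by
    have := hw.apply_eq_smul
    calc f (w : Fin n → ℂ) = ((f.restrict hfp) w : Fin n → ℂ) := (LinearMap.restrict_coe_apply f hfp w).symm
    _ = μ • (w : Fin n → ℂ) := by rw [this]; rfl
  have hμspec : μ ∈ spectrum ℂ B := by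
    rw [← AlgEquiv.spectrum_eq Matrix.toLinAlgEquiv' B, ← End.hasEigenvalue_iff_mem_spectrum]
    exact End.hasEigenvalue_of_hasEigenvector ⟨End.mem_eigenspace_iff.mpr hfw, hwne⟩
  refine ⟨μ, hμspec, ?_⟩
  -- eigenvector equation for B
  have hBw : B.mulVec w = μ • (w : Fin n → ℂ) := by
    rw [← hfw, hf]; simp [Matrix.toLinAlgEquiv'_apply, Matrix.toLin'_apply]
  have hpow : ∀ k : ℕ, (B ^ k).mulVec w = μ ^ k • (w : Fin n → ℂ) := by
    intro k
    induction k with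
    | zero => simp
    | succ k ih =>
        rw [pow_succ, pow_succ, ← Matrix.mulVec_mulVec, hBw, Matrix.mulVec_smul, ih,
          smul_smul, mul_comm]
  -- exp applied to eigenvector
  have hexpw : (exp B).mulVec w = Complex.exp μ • (w : Fin n → ℂ) := by
    have hsum : Summable fun k : ℕ => ((k ! : ℂ))⁻¹ • B ^ k := expSeries_summable' (𝕂 := ℂ) B
    let L : Matrix (Fin n) (Fin n) ℂ →ₗ[ℂ] (Fin n → ℂ) :=
      { toFun := fun M => M.mulVec w
        map_add' := fun M N => Matrix.add_mulVec M N w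
        map_smul' := fun c M => Matrix.smul_mulVec c M w }
    have hLc : Continuous L := LinearMap.continuous_of_finiteDimensional L
    have hmap : L (exp B) = ∑' k : ℕ, L (((k ! : ℂ))⁻¹ • B ^ k) := by
      rw [exp_eq_tsum ℂ]
      exact hsum.hasSum.map L hLc |>.tsum_eq.symm
    have : (exp B).mulVec w = ∑' k : ℕ, (((k ! : ℂ))⁻¹ * μ ^ k) • (w : Fin n → ℂ) := by
      rw [show (exp B).mulVec w = L (exp B) from rfl, hmap]
      refine tsum_congr fun k => ?_
      show (((k ! : ℂ))⁻¹ • B ^ k).mulVec w = _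
      rw [Matrix.smul_mulVec, hpow, smul_smul]
    rw [this, Summable.tsum_smul_const]
    · congr 1
      have := congr_fun (exp_eq_tsum (𝕂 := ℂ) (𝔸 := ℂ)) μ
      rw [← Complex.exp_eq_exp_ℂ] at this
      rw [this]
      simp [smul_eq_mul]
    · simpa [smul_eq_mul] using expSeries_summable' (𝕂 := ℂ) (𝔸 := ℂ) μ
  -- eigenvector equation for exp B with eigenvalue l
  have hgw : (exp B).mulVec w = l • (w : Fin n → ℂ) := by
    have hmem : g (w : Fin n → ℂ) = l • (w : Fin n → ℂ) :=
      End.mem_eigenspace_iff.mp w.2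
    calc (exp B).mulVec w = g (w : Fin n → ℂ) := by
          rw [hg]; simp [Matrix.toLinAlgEquiv'_apply, Matrix.toLin'_apply]
    _ = l • (w : Fin n → ℂ) := hmem
  have heq := hgw.symm.trans hexpw
  have : (l - Complex.exp μ) • (w : Fin n → ℂ) = 0 := by
    rw [sub_smul, heq, sub_self]
  rcases smul_eq_zero.mp this with h | h
  · exact sub_eq_zero.mp h
  · exact absurd h hwne

theorem clm_decay (B : Matrix (Fin n) (Fin n) ℂ) {δ : ℝ} (hδ : 0 < δ)
    (hsp : ∀ μ ∈ spectrum ℂ B, μ.re ≤ -δ) :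
    ∃ C > 0, ∀ t : ℝ, 0 ≤ t →
      ‖exp (t • matCLM ℂ n B)‖ ≤ C * Real.exp (-(δ / 2) * t) := by
  letI : NormedAlgebra ℚ ((Fin n → ℂ) →L[ℂ] (Fin n → ℂ)) := .restrictScalars ℚ ℂ _
  set T : (Fin n → ℂ) →L[ℂ] (Fin n → ℂ) := matCLM ℂ n B with hT
  set gE : (Fin n → ℂ) →L[ℂ] (Fin n → ℂ) := exp T with hgE
  set ρ : ℝ := Real.exp (-(δ / 2)) with hρ
  have hρ0 : 0 < ρ := Real.exp_pos _
  -- spectral radius bound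
  have hsr : spectralRadius ℂ gE ≤ ENNReal.ofReal (Real.exp (-δ)) := by
    rw [spectralRadius]
    refine iSup₂_le fun l hl => ?_
    have hl' : l ∈ spectrum ℂ (exp B) := by
      rw [hgE, hT, ← matCLM_exp, AlgEquiv.spectrum_eq] at hl
      exact hl
    obtain ⟨μ, hμ, rfl⟩ := spec_exp B hl'
    have : ‖Complex.exp μ‖ ≤ Real.exp (-δ) := by
      rw [Complex.norm_exp]
      exact Real.exp_le_exp.mpr (hsp μ hμ)
    calc (‖Complex.exp μ‖₊ : ENNReal) = ENNReal.ofReal ‖Complex.exp μ‖ :=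
          (ofReal_norm _).symm
    _ ≤ ENNReal.ofReal (Real.exp (-δ)) := ENNReal.ofReal_le_ofReal this
  have hlim := spectrum.limsup_pow_nnnorm_pow_one_div_le_spectralRadius gE
  have hlt : limsup (fun k : ℕ => (‖gE ^ k‖₊ : ENNReal) ^ (1 / k : ℝ)) atTop
      < ENNReal.ofReal ρ := by
    refine lt_of_le_of_lt (hlim.trans hsr) ?_
    rw [ENNReal.ofReal_lt_ofReal_iff hρ0]
    exact Real.exp_lt_exp.mpr (by linarith)
  obtain ⟨K, hK⟩ := eventually_atTop.mp (eventually_lt_of_limsup_lt hlt)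
  -- norm bound on powers
  have hpowbd : ∀ k : ℕ, K ≤ k → 1 ≤ k → ‖gE ^ k‖ ≤ ρ ^ k := by
    intro k hk hk1
    have h := (hK k hk).le
    have hne : (k : ℝ) ≠ 0 := by positivity
    have h2 := ENNReal.rpow_le_rpow h (by positivity : (0:ℝ) ≤ (k:ℝ))
    rw [← ENNReal.rpow_mul, one_div, inv_mul_cancel₀ hne, ENNReal.rpow_one,
      ENNReal.ofReal_rpow_of_pos hρ0, Real.rpow_natCast, ← enorm_eq_nnnorm, ← ofReal_norm] at h2
    exact (ENNReal.ofReal_le_ofReal_iff (by positivity)).mp h2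
  -- continuity and compact bound
  have hcont : Continuous fun s : ℝ => exp (s • T) :=
    exp_continuous.comp (continuous_id.smul continuous_const)
  obtain ⟨M, hM⟩ := (isCompact_Icc (a := (0:ℝ)) (b := (K + 2 : ℝ))).exists_bound_of_continuousOn
    hcont.continuousOn
  have hM0 : 0 ≤ M := le_trans (norm_nonneg _) (hM 0 ⟨le_refl _, by positivity⟩)
  refine ⟨(M + 1) * Real.exp (δ / 2 * (K + 2)), by positivity, fun t ht => ?_⟩
  rcases le_or_gt t (K + 1) with hcase | hcase
  · -- bounded regime
    have h1 : ‖exp (t • T)‖ ≤ M := hM t ⟨ht, by linarith⟩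
    have h2 : (1:ℝ) ≤ Real.exp (δ / 2 * (K + 2)) * Real.exp (-(δ / 2) * t) := by
      rw [← Real.exp_add]
      refine Real.one_le_exp (by nlinarith)
    calc ‖exp (t • T)‖ ≤ M := h1
    _ ≤ (M + 1) * 1 := by linarith
    _ ≤ (M + 1) * (Real.exp (δ / 2 * (K + 2)) * Real.exp (-(δ / 2) * t)) := by
        refine mul_le_mul_of_nonneg_left h2 (by linarith)
    _ = (M + 1) * Real.exp (δ / 2 * (K + 2)) * Real.exp (-(δ / 2) * t) := by ring
  · -- decay regime
    set k : ℕ := ⌊t⌋₊ with hk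
    have hkK : K + 1 ≤ k := Nat.le_floor (by push_cast; linarith)
    have hk1 : 1 ≤ k := le_trans (Nat.le_add_left 1 K) hkK
    have hkt : (k : ℝ) ≤ t := Nat.floor_le ht
    have hkt' : t - 1 ≤ (k : ℝ) := by
      have := Nat.lt_floor_add_one t
      linarith
    haveI : SMulCommClass ℝ ((Fin n → ℂ) →L[ℂ] (Fin n → ℂ)) ((Fin n → ℂ) →L[ℂ] (Fin n → ℂ)) :=
      ⟨fun c x y => by
        ext v
        simp [ContinuousLinearMap.smul_apply, ContinuousLinearMap.mul_apply,
          ContinuousLinearMap.map_smul_of_tower]⟩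
    haveI : IsScalarTower ℝ ((Fin n → ℂ) →L[ℂ] (Fin n → ℂ)) ((Fin n → ℂ) →L[ℂ] (Fin n → ℂ)) :=
      ⟨fun c x y => by
        ext v
        simp [ContinuousLinearMap.smul_apply, ContinuousLinearMap.mul_apply]⟩
    have h0 : t • T = (t - (k:ℝ)) • T + (k:ℝ) • T := by
      module
    have hsplit : exp (t • T) = exp ((t - k) • T) * exp ((k : ℝ) • T) := by
      rw [h0, NormedSpace.exp_add_of_commute (((Commute.refl T).smul_left _).smul_right _)]
    have hexpk : exp ((k : ℝ) • T) = gE ^ k := by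
      rw [Nat.cast_smul_eq_nsmul ℝ k T, NormedSpace.exp_nsmul]
    have hbd1 : ‖exp ((t - k) • T)‖ ≤ M := by
      refine hM _ ⟨by linarith, by push_cast; linarith⟩
    have hbd2 : ‖gE ^ k‖ ≤ ρ ^ k := hpowbd k (le_trans (Nat.le_add_right K 1) hkK) hk1
    have hρk : ρ ^ k ≤ Real.exp (δ / 2) * Real.exp (-(δ / 2) * t) := by
      rw [hρ, ← Real.exp_nat_mul, ← Real.exp_add]
      refine Real.exp_le_exp.mpr ?_
      nlinarith [hδ, hkt']
    calc ‖exp (t • T)‖ = ‖exp ((t - k) • T) * exp ((k : ℝ) • T)‖ := by rw [← hsplit]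
    _ ≤ ‖exp ((t - k) • T)‖ * ‖exp ((k : ℝ) • T)‖ := norm_mul_le _ _
    _ ≤ M * (ρ ^ k) := by
        rw [hexpk]
        exact mul_le_mul hbd1 hbd2 (norm_nonneg _) hM0
    _ ≤ M * (Real.exp (δ / 2) * Real.exp (-(δ / 2) * t)) :=
        mul_le_mul_of_nonneg_left hρk hM0
    _ ≤ (M + 1) * Real.exp (δ / 2 * (K + 2)) * Real.exp (-(δ / 2) * t) := by
        have h1 : Real.exp (δ / 2) ≤ Real.exp (δ / 2 * (K + 2)) :=
          Real.exp_le_exp.mpr (by nlinarith)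
        have h2 : (0:ℝ) < Real.exp (-(δ / 2) * t) := Real.exp_pos _
        have h3 : M * Real.exp (δ / 2) ≤ (M + 1) * Real.exp (δ / 2 * (K + 2)) := by
          nlinarith [Real.exp_pos (δ / 2), Real.exp_pos (δ / 2 * (K + 2))]
        calc M * (Real.exp (δ / 2) * Real.exp (-(δ / 2) * t))
            = M * Real.exp (δ / 2) * Real.exp (-(δ / 2) * t) := by ring
        _ ≤ (M + 1) * Real.exp (δ / 2 * (K + 2)) * Real.exp (-(δ / 2) * t) :=
            mul_le_mul_of_nonneg_right h3 h2.le

end LyapunovAux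

attribute [local instance] Matrix.normedAddCommGroup Matrix.normedSpace

section LyapunovAux2

@[reducible] noncomputable def matNAG {m n' R : Type*} [Fintype m] [Fintype n'] [NormedAddCommGroup R] :
    NormedAddCommGroup (Matrix m n' R) :=
  { (Matrix.normedAddCommGroup : NormedAddCommGroup (Matrix m n' R)) with
    toMetricSpace :=
      (Matrix.normedAddCommGroup : NormedAddCommGroup (Matrix m n' R)).toMetricSpace.replaceUniformity rfl }

attribute [local instance] matNAG

@[reducible] noncomputable def matNS {m n' R α : Type*} [Fintype m] [Fintype n'] [NormedField R]
    [NormedAddCommGroup α] [NormedSpace R α] : NormedSpace R (Matrix m n' α) :=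
  { (Matrix.normedSpace : NormedSpace R (Matrix m n' α)) with }

attribute [local instance] matNS

open NormedSpace Filter Module Nat

variable {n : ℕ}

-- entrywise norm lemmas
theorem norm_transpose' (M : Matrix (Fin n) (Fin n) ℝ) : ‖Mᵀ‖ = ‖M‖ := by
  refine le_antisymm ?_ ?_ <;>
    refine (Matrix.norm_le_iff (norm_nonneg _)).mpr fun i j => ?_
  · exact Matrix.norm_entry_le_entrywise_sup_norm M
  · exact Matrix.norm_entry_le_entrywise_sup_norm Mᵀ

theorem norm_map_ofReal (M : Matrix (Fin n) (Fin n) ℝ) :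
    ‖M.map (Complex.ofReal ·)‖ = ‖M‖ := by
  refine le_antisymm ?_ ?_ <;>
    refine (Matrix.norm_le_iff (norm_nonneg _)).mpr fun i j => ?_
  · calc ‖(M.map (Complex.ofReal ·)) i j‖ = ‖M i j‖ := by
          simp [Matrix.map_apply]
    _ ≤ ‖M‖ := Matrix.norm_entry_le_entrywise_sup_norm M
  · calc ‖M i j‖ = ‖(M.map (Complex.ofReal ·)) i j‖ := by simp [Matrix.map_apply]
    _ ≤ ‖M.map (Complex.ofReal ·)‖ := Matrix.norm_entry_le_entrywise_sup_norm _

/-- Multiplication of matrices as a continuous bilinear map (entrywise sup norm). -/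
noncomputable def mulL (n : ℕ) :
    Matrix (Fin n) (Fin n) ℝ →L[ℝ] Matrix (Fin n) (Fin n) ℝ →L[ℝ] Matrix (Fin n) (Fin n) ℝ :=
  LinearMap.toContinuousLinearMap
  { toFun := fun X => LinearMap.toContinuousLinearMap
      { toFun := fun Y => X * Y
        map_add' := fun Y Z => mul_add X Y Z
        map_smul' := fun c Y => by simp [mul_smul_comm] }
    map_add' := fun X X' => by ext Y; simp [add_mul]
    map_smul' := fun c X => by ext Y; simp [smul_mul_assoc] }

@[simp] theorem mulL_apply (X Y : Matrix (Fin n) (Fin n) ℝ) : mulL n X Y = X * Y := rfl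

/-- Transpose as a continuous linear map. -/
noncomputable def trL (n : ℕ) :
    Matrix (Fin n) (Fin n) ℝ →L[ℝ] Matrix (Fin n) (Fin n) ℝ :=
  LinearMap.toContinuousLinearMap
  { toFun := fun X => Xᵀ
    map_add' := fun X Y => Matrix.transpose_add X Y
    map_smul' := fun c X => Matrix.transpose_smul c X }

@[simp] theorem trL_apply (X : Matrix (Fin n) (Fin n) ℝ) : trL n X = Xᵀ := rfl

theorem hasDerivAt_expM (A : Matrix (Fin n) (Fin n) ℝ) (t : ℝ) :
    HasDerivAt (fun u : ℝ => exp (u • A)) (A * exp (t • A)) t := by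
  set T : (Fin n → ℝ) →L[ℝ] (Fin n → ℝ) := matCLM ℝ n A with hT
  set L : ((Fin n → ℝ) →L[ℝ] (Fin n → ℝ)) →L[ℝ] Matrix (Fin n) (Fin n) ℝ :=
    LinearMap.toContinuousLinearMap ((matCLM ℝ n).symm.toLinearMap) with hL
  have h1 : ∀ u : ℝ, matCLM ℝ n (exp (u • A)) = exp (u • T) := by
    intro u
    rw [matCLM_exp, _root_.map_smul]
  have key : ∀ u : ℝ, exp (u • A) = L (exp (u • T)) := by
    intro u
    have := congrArg (matCLM ℝ n).symm (h1 u)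
    rwa [AlgEquiv.symm_apply_apply] at this
  have hW := hasDerivAt_exp_smul_const' (𝕂 := ℝ) T t
  have hcomp := (L.hasFDerivAt).comp_hasDerivAt t hW
  have hfun : (fun u : ℝ => exp (u • A)) = fun u => L (exp (u • T)) := funext key
  have hval : A * exp (t • A) = L (T * exp (t • T)) := by
    have h2 : matCLM ℝ n (A * exp (t • A)) = T * exp (t • T) := by
      rw [_root_.map_mul, h1 t, hT]
    have := congrArg (matCLM ℝ n).symm h2
    rwa [AlgEquiv.symm_apply_apply] at this
  rw [hfun, hval]
  exact hcomp

theorem mat_decay (A : Matrix (Fin n) (Fin n) ℝ) {δ : ℝ} (hδ : 0 < δ)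
    (hsp : ∀ μ ∈ spectrum ℂ (A.map (Complex.ofReal ·)), μ.re ≤ -δ) :
    ∃ C > 0, ∀ t : ℝ, 0 ≤ t →
      ‖exp (t • A)‖ ≤ C * Real.exp (-(δ / 2) * t) := by
  obtain ⟨C, hC0, hC⟩ := clm_decay (A.map (Complex.ofReal ·)) hδ hsp
  set Bc := A.map (Complex.ofReal ·) with hBc
  set L : ((Fin n → ℂ) →L[ℂ] (Fin n → ℂ)) →L[ℝ] Matrix (Fin n) (Fin n) ℂ :=
    LinearMap.toContinuousLinearMap (((matCLM ℂ n).symm.toLinearMap).restrictScalars ℝ)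
    with hLdef
  refine ⟨(‖L‖ + 1) * C, by positivity, fun t ht => ?_⟩
  have hsmul : (t • A).map (Complex.ofReal ·) = t • Bc := by
    ext i j
    show ((t * A i j : ℝ) : ℂ) = t • (Bc i j)
    rw [hBc]
    show ((t * A i j : ℝ) : ℂ) = t • ((A i j : ℝ) : ℂ)
    rw [Complex.real_smul]
    push_cast
    ring
  have h2 : matCLM ℂ n (exp (t • Bc)) = exp (t • matCLM ℂ n Bc) := by
    rw [matCLM_exp]
    congr 1
    exact (matCLM ℂ n).toLinearMap.map_smul_of_tower t Bc
  have h3 : exp (t • Bc) = L (exp (t • matCLM ℂ n Bc)) := by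
    have := congrArg (matCLM ℂ n).symm h2
    rw [AlgEquiv.symm_apply_apply] at this
    exact this
  calc ‖exp (t • A)‖ = ‖(exp (t • A)).map (Complex.ofReal ·)‖ :=
        (norm_map_ofReal _).symm
  _ = ‖exp (t • Bc)‖ := by rw [map_ofReal_exp, hsmul]
  _ = ‖L (exp (t • matCLM ℂ n Bc))‖ := by rw [← h3]
  _ ≤ ‖L‖ * ‖exp (t • matCLM ℂ n Bc)‖ := L.le_opNorm _
  _ ≤ ‖L‖ * (C * Real.exp (-(δ / 2) * t)) := by
      refine mul_le_mul_of_nonneg_left (hC t ht) (norm_nonneg L)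
  _ ≤ (‖L‖ + 1) * C * Real.exp (-(δ / 2) * t) := by
      have h4 : (0:ℝ) < Real.exp (-(δ / 2) * t) := Real.exp_pos _
      nlinarith [norm_nonneg L, h4, hC0]

theorem stmt2_aux {n : ℕ} (A : Matrix (Fin n) (Fin n) ℝ)
    (hA : ∀ μ ∈ spectrum ℂ (A.map (Complex.ofReal ·)), μ.re < 0) :
    (∀ Y : Matrix (Fin n) (Fin n) ℝ, Y.IsSymm →
        ∃! X : Matrix (Fin n) (Fin n) ℝ, X.IsSymm ∧ A * X + X * Aᵀ = -Y) ∧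
      ∀ Y : Matrix (Fin n) (Fin n) ℝ, Y.PosSemidef →
        ∃! X : Matrix (Fin n) (Fin n) ℝ, X.PosSemidef ∧ A * X + X * Aᵀ = -Y ∧
          X = ∫ t in Set.Ioi (0 : ℝ),
                NormedSpace.exp (t • A) * Y * NormedSpace.exp (t • Aᵀ) := by
  classical
  obtain ⟨δ, hδ0, hsp⟩ : ∃ δ : ℝ, 0 < δ ∧
      ∀ μ ∈ spectrum ℂ (A.map (Complex.ofReal ·)), μ.re ≤ -δ := by
    have hfin : (spectrum ℂ (A.map (Complex.ofReal ·))).Finite := Matrix.finite_spectrum _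
    rcases (spectrum ℂ (A.map (Complex.ofReal ·))).eq_empty_or_nonempty with h | h
    · exact ⟨1, one_pos, fun μ hμ => by rw [h] at hμ; exact absurd hμ (Set.notMem_empty μ)⟩
    · have hne : hfin.toFinset.Nonempty := by
        rwa [Set.Finite.toFinset_nonempty]
      set m := hfin.toFinset.sup' hne Complex.re with hm
      have hmlt : m < 0 := by
        rw [hm, Finset.sup'_lt_iff]
        intro μ hμ
        exact hA μ (hfin.mem_toFinset.mp hμ)
      refine ⟨-m, by linarith, fun μ hμ => ?_⟩
      rw [neg_neg]
      exact Finset.le_sup' Complex.re (hfin.mem_toFinset.mpr hμ)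
  obtain ⟨C, hC0, hC⟩ := mat_decay A hδ0 hsp
  set ν : ℝ := δ / 2 with hν
  have hν0 : 0 < ν := by positivity
  set E : ℝ → Matrix (Fin n) (Fin n) ℝ := fun t => NormedSpace.exp (t • A) with hE
  have hEd : ∀ t, HasDerivAt E (A * E t) t := fun t => hasDerivAt_expM A t
  have hEt : ∀ t, (E t)ᵀ = NormedSpace.exp (t • Aᵀ) := by
    intro t
    rw [hE]
    show (NormedSpace.exp (t • A))ᵀ = _
    rw [← Matrix.exp_transpose, Matrix.transpose_smul]
  have hE0 : E 0 = 1 := by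
    rw [hE]
    show NormedSpace.exp ((0:ℝ) • A) = 1
    rw [zero_smul, NormedSpace.exp_zero]
  set g : Matrix (Fin n) (Fin n) ℝ → ℝ → Matrix (Fin n) (Fin n) ℝ :=
    fun Y t => E t * Y * (E t)ᵀ with hg
  -- derivative of g
  have hgd : ∀ Y t, HasDerivAt (g Y) (A * g Y t + g Y t * Aᵀ) t := by
    intro Y t
    have hu : HasDerivAt (fun t => E t * Y) (A * E t * Y) t := by
      have := ((mulL n).flip Y).hasFDerivAt.comp_hasDerivAt t (hEd t)
      exact this
    have hc : HasDerivAt (fun t => mulL n (E t * Y)) (mulL n (A * E t * Y)) t :=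
      by have := (mulL n).hasFDerivAt.comp_hasDerivAt t hu; exact this
    have hv : HasDerivAt (fun t => (E t)ᵀ) ((A * E t)ᵀ) t := by
      have := (trL n).hasFDerivAt.comp_hasDerivAt t (hEd t)
      exact this
    have hca := hc.clm_apply hv
    have heq : mulL n (A * E t * Y) ((E t)ᵀ) + mulL n (E t * Y) ((A * E t)ᵀ)
        = A * g Y t + g Y t * Aᵀ := by
      simp only [mulL_apply, hg, Matrix.transpose_mul]
      noncomm_ring
    rw [heq] at hca
    exact hca
  have hgc : ∀ Y, Continuous (g Y) :=
    fun Y => continuous_iff_continuousAt.mpr fun t => (hgd Y t).continuousAt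
  -- bound
  have hgb : ∀ Y t, 0 ≤ t →
      ‖g Y t‖ ≤ (‖mulL n‖ ^ 2 * ‖Y‖ * C ^ 2) * Real.exp (-(2 * ν * t)) := by
    intro Y t ht
    have h1 : ‖E t‖ ≤ C * Real.exp (-ν * t) := by
      have := hC t ht
      rwa [hν] at this ⊢
    have ha : (0:ℝ) ≤ ‖E t‖ := norm_nonneg _
    have hexp : Real.exp (-ν * t) * Real.exp (-ν * t) = Real.exp (-(2 * ν * t)) := by
      rw [← Real.exp_add]; ring_nf
    have h2 : ‖mulL n (E t) Y‖ ≤ ‖mulL n‖ * ‖E t‖ * ‖Y‖ := (mulL n).le_opNorm₂ _ _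
    have h3 : ‖g Y t‖ ≤ ‖mulL n‖ * ‖mulL n (E t) Y‖ * ‖(E t)ᵀ‖ := by
      have := (mulL n).le_opNorm₂ (mulL n (E t) Y) ((E t)ᵀ)
      simpa [hg] using this
    rw [norm_transpose'] at h3
    have hEexp : (0:ℝ) ≤ C * Real.exp (-ν * t) := by positivity
    calc ‖g Y t‖ ≤ ‖mulL n‖ * ‖mulL n (E t) Y‖ * ‖E t‖ := h3
    _ ≤ ‖mulL n‖ * (‖mulL n‖ * ‖E t‖ * ‖Y‖) * ‖E t‖ := by
        have hm0 : (0:ℝ) ≤ ‖mulL n‖ := ContinuousLinearMap.opNorm_nonneg _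
        nlinarith [mul_le_mul_of_nonneg_left (mul_le_mul_of_nonneg_right h2 ha) hm0]
    _ = ‖mulL n‖ ^ 2 * ‖Y‖ * (‖E t‖ * ‖E t‖) := by ring
    _ ≤ ‖mulL n‖ ^ 2 * ‖Y‖ * ((C * Real.exp (-ν * t)) * (C * Real.exp (-ν * t))) := by
        have hm0 : (0:ℝ) ≤ ‖mulL n‖ ^ 2 * ‖Y‖ := by positivity
        refine mul_le_mul_of_nonneg_left ?_ hm0
        nlinarith
    _ = (‖mulL n‖ ^ 2 * ‖Y‖ * C ^ 2) * Real.exp (-(2 * ν * t)) := by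
        rw [← hexp]; ring
  -- integrability
  have hgi : ∀ Y, MeasureTheory.IntegrableOn (g Y) (Set.Ioi (0:ℝ)) := by
    intro Y
    refine MeasureTheory.Integrable.mono'
      (((exp_neg_integrableOn_Ioi 0 (by positivity : (0:ℝ) < 2 * ν)).const_mul
        (‖mulL n‖ ^ 2 * ‖Y‖ * C ^ 2))) ((hgc Y).aestronglyMeasurable) ?_
    rw [MeasureTheory.ae_restrict_iff' measurableSet_Ioi]
    exact MeasureTheory.ae_of_all _ fun t ht => by
      simpa [mul_assoc] using hgb Y t (le_of_lt ht)
  -- tendsto 0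
  have hgt : ∀ Y, Filter.Tendsto (g Y) Filter.atTop (nhds 0) := by
    intro Y
    have h1 : Filter.Tendsto (fun t : ℝ => 2 * ν * t) Filter.atTop Filter.atTop :=
      Filter.Tendsto.const_mul_atTop (by positivity) Filter.tendsto_id
    have h2 := Real.tendsto_exp_neg_atTop_nhds_zero.comp h1
    have h3 : Filter.Tendsto
        (fun t : ℝ => (‖mulL n‖ ^ 2 * ‖Y‖ * C ^ 2) * Real.exp (-(2 * ν * t)))
        Filter.atTop (nhds 0) := by
      have := h2.const_mul (‖mulL n‖ ^ 2 * ‖Y‖ * C ^ 2)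
      simpa [Function.comp] using this
    refine squeeze_zero_norm' ?_ h3
    filter_upwards [Filter.eventually_ge_atTop 0] with t ht using hgb Y t ht
  -- derivative integrable
  have hgdi : ∀ Y, MeasureTheory.IntegrableOn
      (fun t => A * g Y t + g Y t * Aᵀ) (Set.Ioi (0:ℝ)) := by
    intro Y
    have h1 := ((mulL n) A).integrable_comp (hgi Y)
    have h2 := ((mulL n).flip Aᵀ).integrable_comp (hgi Y)
    exact h1.add h2
  -- FTC
  have hftc : ∀ Y, (∫ t in Set.Ioi (0:ℝ), (A * g Y t + g Y t * Aᵀ)) = -Y := by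
    intro Y
    have h0 : g Y 0 = Y := by
      rw [hg]
      show E 0 * Y * (E 0)ᵀ = Y
      rw [hE0]
      simp
    have := MeasureTheory.integral_Ioi_of_hasDerivAt_of_tendsto'
      (f := g Y) (fun t _ => hgd Y t) (hgdi Y) (hgt Y)
    rw [this, h0, zero_sub]
  set X : Matrix (Fin n) (Fin n) ℝ → Matrix (Fin n) (Fin n) ℝ :=
    fun Y => ∫ t in Set.Ioi (0:ℝ), g Y t with hXdef
  have hXeq : ∀ Y, A * X Y + X Y * Aᵀ = -Y := by
    intro Y
    have hint1 : MeasureTheory.IntegrableOn (fun t => A * g Y t) (Set.Ioi (0:ℝ)) := by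
      exact ((mulL n) A).integrable_comp (hgi Y)
    have hint2 : MeasureTheory.IntegrableOn (fun t => g Y t * Aᵀ) (Set.Ioi (0:ℝ)) := by
      exact ((mulL n).flip Aᵀ).integrable_comp (hgi Y)
    have h1 : A * X Y = ∫ t in Set.Ioi (0:ℝ), A * g Y t := by
      have := ((mulL n) A).integral_comp_comm (hgi Y)
      simpa [hXdef] using this.symm
    have h2 : X Y * Aᵀ = ∫ t in Set.Ioi (0:ℝ), g Y t * Aᵀ := by
      have := ((mulL n).flip Aᵀ).integral_comp_comm (hgi Y)
      simpa [hXdef] using this.symm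
    rw [h1, h2, ← MeasureTheory.integral_add hint1 hint2]
    exact hftc Y
  -- uniqueness
  have huniq : ∀ (Y X₁ X₂ : Matrix (Fin n) (Fin n) ℝ),
      A * X₁ + X₁ * Aᵀ = -Y → A * X₂ + X₂ * Aᵀ = -Y → X₁ = X₂ := by
    intro Y X₁ X₂ h1 h2
    have hD0 : A * (X₁ - X₂) + (X₁ - X₂) * Aᵀ = 0 := by
      have h3 : A * (X₁ - X₂) + (X₁ - X₂) * Aᵀ
          = (A * X₁ + X₁ * Aᵀ) - (A * X₂ + X₂ * Aᵀ) := by noncomm_ring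
      rw [h3, h1, h2, sub_self]
    set D := X₁ - X₂ with hD
    have hcomm : ∀ t, A * E t = E t * A := by
      intro t
      exact (((Commute.refl A).smul_right t).exp_right).eq
    have hzero : ∀ t, A * g D t + g D t * Aᵀ = 0 := by
      intro t
      have ht : (E t)ᵀ * Aᵀ = Aᵀ * (E t)ᵀ := by
        rw [← Matrix.transpose_mul, ← Matrix.transpose_mul, hcomm t]
      have expand : A * g D t + g D t * Aᵀ
          = (A * E t) * (D * (E t)ᵀ) + E t * D * ((E t)ᵀ * Aᵀ) := by
        rw [hg]; noncomm_ring
      rw [expand, hcomm t, ht]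
      calc E t * A * (D * (E t)ᵀ) + E t * D * (Aᵀ * (E t)ᵀ)
          = E t * (A * D + D * Aᵀ) * (E t)ᵀ := by noncomm_ring
      _ = 0 := by rw [hD0]; simp
    have hgd0 : ∀ t, HasDerivAt (g D) 0 t := by
      intro t
      have := hgd D t
      rwa [hzero t] at this
    have hconst : ∀ t, g D t = g D 0 := fun t =>
      is_const_of_deriv_eq_zero (fun s => (hgd0 s).differentiableAt)
        (fun s => (hgd0 s).deriv) t 0
    have h0 : g D 0 = D := by
      rw [hg]
      show E 0 * D * (E 0)ᵀ = D
      rw [hE0]; simp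
    have htend : Filter.Tendsto (g D) Filter.atTop (nhds D) := by
      rw [show g D = fun _ => D from funext fun t => (hconst t).trans h0]
      exact tendsto_const_nhds
    have : D = 0 := tendsto_nhds_unique htend (hgt D)
    exact sub_eq_zero.mp this
  -- symmetry
  have hXsymm : ∀ Y : Matrix (Fin n) (Fin n) ℝ, Y.IsSymm → (X Y).IsSymm := by
    intro Y hY
    have h1 : ∀ t, trL n (g Y t) = g Y t := by
      intro t
      rw [trL_apply, hg]
      show (E t * Y * (E t)ᵀ)ᵀ = _
      rw [Matrix.transpose_mul, Matrix.transpose_mul, Matrix.transpose_transpose, hY]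
      noncomm_ring
    show (X Y)ᵀ = X Y
    have h2 := (trL n).integral_comp_comm (hgi Y)
    calc (X Y)ᵀ = trL n (X Y) := (trL_apply _).symm
    _ = ∫ t in Set.Ioi (0:ℝ), trL n (g Y t) := by rw [hXdef]; exact h2.symm
    _ = ∫ t in Set.Ioi (0:ℝ), g Y t := by simp only [h1]
    _ = X Y := rfl
  -- positive semidefiniteness
  have hXpsd : ∀ Y : Matrix (Fin n) (Fin n) ℝ, Y.PosSemidef → (X Y).PosSemidef := by
    intro Y hY
    have hsy : Y.IsSymm := by
      have h1 := hY.isHermitian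
      have h2 : Yᴴ = Yᵀ := by ext i j; simp [Matrix.conjTranspose_apply]
      show Yᵀ = Y
      rw [← h2]; exact h1
    refine Matrix.posSemidef_iff_dotProduct_mulVec.mpr ⟨?_, ?_⟩
    · have hs := hXsymm Y hsy
      show (X Y)ᴴ = X Y
      have h2 : (X Y)ᴴ = (X Y)ᵀ := by ext i j; simp [Matrix.conjTranspose_apply]
      rw [h2]; exact hs
    · intro x
      set q : Matrix (Fin n) (Fin n) ℝ →L[ℝ] ℝ := LinearMap.toContinuousLinearMap
        { toFun := fun M => dotProduct (star x) (M.mulVec x)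
          map_add' := fun M N => by simp [Matrix.add_mulVec, dotProduct_add]
          map_smul' := fun c M => by
            simp [Matrix.smul_mulVec, dotProduct_smul] } with hqdef
      have hq : ∀ M, q M = dotProduct (star x) (M.mulVec x) := fun _ => rfl
      have h2 := q.integral_comp_comm (hgi Y)
      have h3 : ∀ t ∈ Set.Ioi (0:ℝ), 0 ≤ q (g Y t) := by
        intro t _
        have hpsd : (g Y t).PosSemidef := by
          have h4 := hY.mul_mul_conjTranspose_same (E t)
          have h5 : (E t)ᴴ = (E t)ᵀ := by ext i j; simp [Matrix.conjTranspose_apply]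
          rw [h5] at h4
          exact h4
        simpa [hq] using hpsd.dotProduct_mulVec_nonneg x
      have h6 : 0 ≤ ∫ t in Set.Ioi (0:ℝ), q (g Y t) :=
        MeasureTheory.setIntegral_nonneg measurableSet_Ioi h3
      rw [h2] at h6
      simpa [hq] using h6
  have hXint : ∀ Y, X Y = ∫ t in Set.Ioi (0 : ℝ),
      NormedSpace.exp (t • A) * Y * NormedSpace.exp (t • Aᵀ) := by
    intro Y
    have hfun : (fun t => g Y t) =
        fun t => NormedSpace.exp (t • A) * Y * NormedSpace.exp (t • Aᵀ) := by
      funext t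
      rw [hg]
      show E t * Y * (E t)ᵀ = _
      rw [hEt t]
    show (∫ t in Set.Ioi (0:ℝ), g Y t) = _
    rw [hfun]
  constructor
  · intro Y hY
    exact ⟨X Y, ⟨hXsymm Y hY, hXeq Y⟩, fun X' hX' => huniq Y X' (X Y) hX'.2 (hXeq Y)⟩
  · intro Y hY
    refine ⟨X Y, ⟨hXpsd Y hY, hXeq Y, hXint Y⟩, ?_⟩
    intro X' hX'
    exact hX'.2.2.trans (hXint Y).symm

end LyapunovAux2

theorem stmt2 {n : ℕ} (A : Matrix (Fin n) (Fin n) ℝ)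
    (hA : ∀ μ ∈ spectrum ℂ (A.map (Complex.ofReal ·)), μ.re < 0) :
    (∀ Y : Matrix (Fin n) (Fin n) ℝ, Y.IsSymm →
        ∃! X : Matrix (Fin n) (Fin n) ℝ, X.IsSymm ∧ A * X + X * Aᵀ = -Y) ∧
      ∀ Y : Matrix (Fin n) (Fin n) ℝ, Y.PosSemidef →
        ∃! X : Matrix (Fin n) (Fin n) ℝ, X.PosSemidef ∧ A * X + X * Aᵀ = -Y ∧
          X = ∫ t in Set.Ioi (0 : ℝ),
                NormedSpace.exp (t • A) * Y * NormedSpace.exp (t • Aᵀ) := by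
  exact stmt2_aux A hA
end

section
/- Let L be an invertible resolvent-positive operator (or more concretely: suppose -L⁻¹ maps the cone of positive semidefinite tuples to itself) and Π a positive operator with ρ(L⁻¹Π) < 1. Then the unique solution X of (L + Π)(X) = -Y with Y in the positive cone also lies in the positive cone. -/
open TensorProduct Matrix

/-- `ρ(T) < 1`: every element of the (complex) spectrum of the complexification of the
real linear operator `T` has modulus less than one. -/
def SpecRadiusLtOne {V : Type*} [AddCommGroup V] [Module ℝ V] (T : V →ₗ[ℝ] V) : Prop :=
  ∀ μ ∈ spectrum ℂ (LinearMap.baseChange ℂ T : Module.End ℂ (ℂ ⊗[ℝ] V)), ‖μ‖ < 1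

/-- The positive cone: tuples of positive semidefinite matrices. -/
def PosTuple {n N : ℕ} (X : Fin N → Matrix (Fin n) (Fin n) ℝ) : Prop :=
  ∀ i, (X i).PosSemidef

open Filter Topology

lemma matrix_pow_tendsto_zero {d : ℕ} (A : Matrix (Fin d) (Fin d) ℂ)
    (h : ∀ μ ∈ spectrum ℂ A, ‖μ‖ < 1) :
    Tendsto (fun m => A ^ m) atTop (𝓝 0) := by
  rcases Nat.eq_zero_or_pos d with hd | hd
  · subst hd
    have hss : Subsingleton (Matrix (Fin 0) (Fin 0) ℂ) :=
      ⟨fun a b => by ext i j; exact i.elim0⟩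
    have : (fun m : ℕ => A ^ m) = fun _ => 0 := funext fun m => Subsingleton.elim _ _
    rw [this]; exact tendsto_const_nhds
  have : Nontrivial (EuclideanSpace ℂ (Fin d)) := by
    haveI : Nonempty (Fin d) := ⟨⟨0, hd⟩⟩
    infer_instance
  set a := Matrix.toEuclideanCLM (𝕜 := ℂ) A with ha
  have hspec : spectrum ℂ a = spectrum ℂ A := AlgEquiv.spectrum_eq _ A
  have hne : (spectrum ℂ a).Nonempty := spectrum.nonempty a
  have hrad : spectralRadius ℂ a < 1 := by
    have := spectrum.spectralRadius_lt_of_forall_lt_of_nonempty (𝕜 := ℂ) hne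
      (r := 1) (fun k hk => by
        rw [hspec] at hk
        simpa [← NNReal.coe_lt_coe] using h k hk)
    simpa using this
  have hg := spectrum.pow_nnnorm_pow_one_div_tendsto_nhds_spectralRadius a
  obtain ⟨r, hr1, hr2⟩ := exists_between hrad
  have hlim : ∀ᶠ m : ℕ in atTop, (‖a ^ m‖₊ : ENNReal) ^ (1 / (m:ℝ)) < r :=
    hg.eventually_lt_const hr1
  have hbound : ∀ᶠ m : ℕ in atTop, (‖a ^ m‖₊ : ENNReal) ≤ r ^ m := by
    filter_upwards [hlim, eventually_ge_atTop 1] with m hm hm1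
    have hm0 : (m : ℝ) ≠ 0 := by positivity
    calc (‖a ^ m‖₊ : ENNReal) = ((‖a ^ m‖₊ : ENNReal) ^ (1 / (m:ℝ))) ^ (m:ℝ) := by
          rw [← ENNReal.rpow_mul, one_div_mul_cancel hm0, ENNReal.rpow_one]
      _ ≤ r ^ (m:ℝ) := ENNReal.rpow_le_rpow hm.le (by positivity)
      _ = r ^ m := ENNReal.rpow_natCast r m
  have h0 : Tendsto (fun m : ℕ => (‖a ^ m‖₊ : ENNReal)) atTop (𝓝 0) := by
    refine tendsto_of_tendsto_of_tendsto_of_le_of_le' tendsto_const_nhds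
      (ENNReal.tendsto_pow_atTop_nhds_zero_of_lt_one hr2) ?_ hbound
    exact Eventually.of_forall fun m => zero_le
  have h1 : Tendsto (fun m : ℕ => a ^ m) atTop (𝓝 0) := by
    rw [tendsto_zero_iff_norm_tendsto_zero]
    have h0' : Tendsto (fun m : ℕ => (‖a ^ m‖₊ : NNReal)) atTop (𝓝 0) := by
      have := (ENNReal.tendsto_toNNReal (a := 0) (by simp)).comp h0
      simpa [Function.comp_def] using this
    exact NNReal.tendsto_coe.2 h0'
  have h2 : ∀ m : ℕ, A ^ m = (Matrix.toEuclideanCLM (𝕜 := ℂ) (n := Fin d)).symm (a ^ m) := by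
    intro m
    rw [ha, ← map_pow]
    simp
  let e := Matrix.toEuclideanCLM (𝕜 := ℂ) (n := Fin d)
  let ℓ : (EuclideanSpace ℂ (Fin d) →L[ℂ] EuclideanSpace ℂ (Fin d)) →ₗ[ℂ]
      Matrix (Fin d) (Fin d) ℂ :=
    { toFun := fun f => e.symm f
      map_add' := fun x y => map_add _ _ _
      map_smul' := fun c x => map_smul _ _ _ }
  have hc : Continuous ℓ := ℓ.continuous_of_finiteDimensional
  have : Tendsto (fun m : ℕ => ℓ (a ^ m)) atTop (𝓝 (ℓ 0)) :=
    (hc.tendsto 0).comp h1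
  simpa only [map_zero] using this.congr fun m => (h2 m).symm

lemma pow_apply_tendsto_zero {V : Type*} [AddCommGroup V] [Module ℝ V]
    [TopologicalSpace V] [IsTopologicalAddGroup V] [ContinuousSMul ℝ V]
    [FiniteDimensional ℝ V]
    (T : V →ₗ[ℝ] V) (hT : SpecRadiusLtOne T) (x : V) :
    Tendsto (fun m => (T ^ m) x) atTop (𝓝 0) := by
  set d := Module.finrank ℝ V
  let b : Module.Basis (Fin d) ℝ V := Module.finBasis ℝ V
  let M : Matrix (Fin d) (Fin d) ℝ := LinearMap.toMatrix b b T
  let Mc : Matrix (Fin d) (Fin d) ℂ := M.map (algebraMap ℝ ℂ)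
  have hbc : LinearMap.toMatrix (Algebra.TensorProduct.basis ℂ b)
      (Algebra.TensorProduct.basis ℂ b) (T.baseChange ℂ) = Mc :=
    LinearMap.toMatrix_baseChange ℂ T b b
  have hspec : ∀ μ ∈ spectrum ℂ Mc, ‖μ‖ < 1 := by
    intro μ hμ
    apply hT
    have := AlgEquiv.spectrum_eq
      (LinearMap.toMatrixAlgEquiv (Algebra.TensorProduct.basis ℂ b)) (T.baseChange ℂ)
    rw [← this]
    rwa [show LinearMap.toMatrixAlgEquiv (Algebra.TensorProduct.basis ℂ b) (T.baseChange ℂ)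
      = Mc from hbc]
  have hMc := matrix_pow_tendsto_zero Mc hspec
  have hM : Tendsto (fun m => M ^ m) atTop (𝓝 0) := by
    refine tendsto_pi_nhds.2 ?_
    intro i
    rw [tendsto_pi_nhds]
    intro j
    have h1 : Tendsto (fun m => (Mc ^ m) i j) atTop (𝓝 0) := by
      have : Continuous fun (A : Matrix (Fin d) (Fin d) ℂ) => A i j :=
        (continuous_apply j).comp (continuous_apply i)
      simpa [Function.comp_def] using (this.tendsto 0).comp hMc
    have h2 : ∀ m, (Mc ^ m) i j = Complex.ofReal ((M ^ m) i j) := by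
      intro m
      have : Mc ^ m = (M ^ m).map (algebraMap ℝ ℂ) := by
        simpa [Mc] using (map_pow (algebraMap ℝ ℂ).mapMatrix M m).symm
      rw [this]; rfl
    have h3 : Tendsto (fun m => Complex.ofReal ((M ^ m) i j)) atTop (𝓝 0) :=
      h1.congr fun m => h2 m
    have := (Complex.continuous_re.tendsto 0).comp h3
    simpa [Function.comp_def] using this
  let ψ : Matrix (Fin d) (Fin d) ℝ →ₗ[ℝ] V :=
    { toFun := fun M' => Matrix.toLin b b M' x
      map_add' := fun A B => by simp [map_add, LinearMap.add_apply]
      map_smul' := fun c A => by simp [_root_.map_smul, LinearMap.smul_apply] }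
  have hψ : Continuous ψ := ψ.continuous_of_finiteDimensional
  have hTm : ∀ m, (T ^ m) x = ψ (M ^ m) := by
    intro m
    have : M ^ m = LinearMap.toMatrix b b (T ^ m) := by
      simpa [LinearMap.toMatrixAlgEquiv] using (map_pow (LinearMap.toMatrixAlgEquiv b) T m).symm
    simp only [ψ, LinearMap.coe_mk, AddHom.coe_mk, this, Matrix.toLin_toMatrix]
  have := (hψ.tendsto 0).comp hM
  simpa only [map_zero] using this.congr fun m => (hTm m).symm

lemma specRadiusLtOne_neg {V : Type*} [AddCommGroup V] [Module ℝ V]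
    {T : V →ₗ[ℝ] V} (hT : SpecRadiusLtOne T) : SpecRadiusLtOne (-T) := by
  intro μ hμ
  rw [LinearMap.baseChange_neg, ← spectrum.neg_eq, Set.mem_neg] at hμ
  simpa using hT (-μ) hμ

lemma isClosed_posTuple {n N : ℕ} : IsClosed {X : Fin N → Matrix (Fin n) (Fin n) ℝ | PosTuple X} := by
  have : {X : Fin N → Matrix (Fin n) (Fin n) ℝ | PosTuple X} =
      ⋂ i, ({X : Fin N → Matrix (Fin n) (Fin n) ℝ | (X i)ᴴ = X i} ∩
        ⋂ v : Fin n → ℝ, {X | 0 ≤ star v ⬝ᵥ (X i) *ᵥ v}) := by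
    ext X
    simp only [Set.mem_setOf_eq, Set.mem_iInter, Set.mem_inter_iff]
    constructor
    · intro h i
      exact ⟨(h i).1, fun v => (h i).dotProduct_mulVec_nonneg v⟩
    · intro h i
      exact Matrix.PosSemidef.of_dotProduct_mulVec_nonneg (h i).1 fun v => (h i).2 v
  rw [this]
  refine isClosed_iInter fun i => IsClosed.inter ?_ (isClosed_iInter fun v => ?_)
  · let f : (Fin N → Matrix (Fin n) (Fin n) ℝ) →ₗ[ℝ] Matrix (Fin n) (Fin n) ℝ :=
      { toFun := fun X => (X i)ᴴ
        map_add' := fun X Y => by simp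
        map_smul' := fun c X => by simp }
    let g : (Fin N → Matrix (Fin n) (Fin n) ℝ) →ₗ[ℝ] Matrix (Fin n) (Fin n) ℝ :=
      { toFun := fun X => X i
        map_add' := fun X Y => by simp
        map_smul' := fun c X => by simp }
    exact isClosed_eq f.continuous_of_finiteDimensional g.continuous_of_finiteDimensional
  · let g : (Fin N → Matrix (Fin n) (Fin n) ℝ) →ₗ[ℝ] ℝ :=
      { toFun := fun X => star v ⬝ᵥ (X i) *ᵥ v
        map_add' := fun X Y => by simp [Matrix.add_mulVec, dotProduct_add]
        map_smul' := fun c X => by simp [Matrix.smul_mulVec, dotProduct_smul] }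
    have : {X : Fin N → Matrix (Fin n) (Fin n) ℝ | 0 ≤ star v ⬝ᵥ (X i) *ᵥ v} =
        g ⁻¹' Set.Ici 0 := rfl
    rw [this]
    exact IsClosed.preimage g.continuous_of_finiteDimensional isClosed_Ici

theorem stmt4 {n N : ℕ}
    (L P : (Fin N → Matrix (Fin n) (Fin n) ℝ) →ₗ[ℝ] (Fin N → Matrix (Fin n) (Fin n) ℝ))
    (hL : Function.Bijective L)
    (hLinv : ∀ X, PosTuple X → PosTuple (-(LinearEquiv.ofBijective L hL).symm X))
    (hP : ∀ X, PosTuple X → PosTuple (P X))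
    (hρ : SpecRadiusLtOne ((LinearEquiv.ofBijective L hL).symm.toLinearMap ∘ₗ P))
    (Y : Fin N → Matrix (Fin n) (Fin n) ℝ) (hY : PosTuple Y) :
    (∃! X, (L + P) X = -Y) ∧ ∀ X, (L + P) X = -Y → PosTuple X := by
  let V := Fin N → Matrix (Fin n) (Fin n) ℝ
  let Linv : V →ₗ[ℝ] V := (LinearEquiv.ofBijective L hL).symm.toLinearMap
  let A : V →ₗ[ℝ] V := Linv ∘ₗ P
  let B : V →ₗ[ℝ] V := -A
  have hBρ : SpecRadiusLtOne B := specRadiusLtOne_neg hρ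
  have htend : ∀ x : V, Tendsto (fun m => (B ^ m) x) atTop (𝓝 0) :=
    fun x => pow_apply_tendsto_zero B hBρ x
  have hBpos : ∀ X, PosTuple X → PosTuple (B X) := by
    intro X hX
    exact hLinv (P X) (hP X hX)
  have hLinvL : ∀ x : V, Linv (L x) = x := fun x =>
    (LinearEquiv.ofBijective L hL).symm_apply_apply x
  -- fixed point equation
  have hfix : ∀ X W : V, (L + P) X = W → X = Linv W + B X := by
    intro X W hX
    have h1 : Linv ((L + P) X) = Linv W := by rw [hX]
    have h2 : Linv (L X) + Linv (P X) = Linv W := by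
      simpa [map_add] using h1
    rw [hLinvL] at h2
    have h3 : X = Linv W - Linv (P X) := by
      rw [← h2]; abel
    have h4 : B X = -(Linv (P X)) := rfl
    rw [h4, ← sub_eq_add_neg]
    exact h3
  -- injectivity
  have hinj : Function.Injective (L + P) := by
    rw [injective_iff_map_eq_zero]
    intro x hx
    have hxB : x = B x := by
      have := hfix x 0 hx
      simpa using this
    have hxBm : ∀ m : ℕ, (B ^ m) x = x := by
      intro m
      induction m with
      | zero => simp
      | succ m ih => rw [pow_succ, Module.End.mul_apply, ← hxB, ih]
    have : Tendsto (fun _ : ℕ => x) atTop (𝓝 (0 : V)) :=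
      (htend x).congr fun m => hxBm m
    exact tendsto_nhds_unique tendsto_const_nhds this
  have hsurj : Function.Surjective (L + P) := LinearMap.injective_iff_surjective.mp hinj
  -- positivity of solutions
  have hposAll : ∀ X, (L + P) X = -Y → PosTuple X := by
    intro X hX
    let Z : V := Linv (-Y)
    have hZpos : PosTuple Z := by
      have h := hLinv Y hY
      have : Z = -((LinearEquiv.ofBijective L hL).symm Y) := by
        show Linv (-Y) = _
        rw [map_neg]
        rfl
      rw [this]
      exact h
    have hXfix : X = Z + B X := hfix X (-Y) hX
    let S : ℕ → V := fun m => ∑ k ∈ Finset.range m, (B ^ k) Z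
    have hSm : ∀ m, X = S m + (B ^ m) X := by
      intro m
      induction m with
      | zero => simp [S]
      | succ m ih =>
        have hbm : (B ^ m) X = (B ^ m) Z + (B ^ (m + 1)) X := by
          calc (B ^ m) X = (B ^ m) (Z + B X) := by rw [← hXfix]
            _ = (B ^ m) Z + (B ^ m) (B X) := by rw [map_add]
            _ = (B ^ m) Z + (B ^ (m + 1)) X := by
                rw [pow_succ, Module.End.mul_apply]
        calc X = S m + (B ^ m) X := ih
          _ = S m + ((B ^ m) Z + (B ^ (m + 1)) X) := by rw [hbm]
          _ = (S m + (B ^ m) Z) + (B ^ (m + 1)) X := (add_assoc _ _ _).symm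
          _ = S (m + 1) + (B ^ (m + 1)) X := by
              rw [show S (m + 1) = S m + (B ^ m) Z from Finset.sum_range_succ _ m]
    have hBkZ : ∀ k : ℕ, PosTuple ((B ^ k) Z) := by
      intro k
      induction k with
      | zero => simpa using hZpos
      | succ k ih =>
        have : (B ^ (k + 1)) Z = B ((B ^ k) Z) := by
          rw [pow_succ', Module.End.mul_apply]
        rw [this]
        exact hBpos _ ih
    have hSpos : ∀ m, PosTuple (S m) := by
      intro m
      induction m with
      | zero => intro i; simp only [S, Finset.range_zero, Finset.sum_empty]; exact Matrix.PosSemidef.zero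
      | succ m ih =>
        have : S (m + 1) = S m + (B ^ m) Z := by
          simp [S, Finset.sum_range_succ]
        rw [this]
        intro i
        exact (ih i).add (hBkZ m i)
    have htendS : Tendsto S atTop (𝓝 X) := by
      have h1 : Tendsto (fun m => X - (B ^ m) X) atTop (𝓝 (X - 0)) :=
        tendsto_const_nhds.sub (htend X)
      simp only [sub_zero] at h1
      exact h1.congr fun m => (eq_sub_of_add_eq (hSm m).symm).symm
    exact isClosed_posTuple.mem_of_tendsto htendS (Eventually.of_forall hSpos)
  refine ⟨?_, hposAll⟩
  obtain ⟨X, hX⟩ := hsurj (-Y)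
  exact ⟨X, hX, fun X' hX' => hinj (hX'.trans hX.symm)⟩
end

section
/- If there exists an N-tuple X of positive definite symmetric matrices such that A_i X_i + X_i A_i^T + Σ_{j=1}^N γ_{ij} X_j is negative definite for every i, then each matrix A_i + (γ_{ii}/2) I has all eigenvalues with negative real part. -/
open Matrix

private lemma aux_re {n : ℕ} (P : Matrix (Fin n) (Fin n) ℝ) (v : Fin n → ℂ) :
    ((star v) ⬝ᵥ (P.map (Complex.ofReal ·)) *ᵥ v).re =
      (fun k => (v k).re) ⬝ᵥ (P *ᵥ fun k => (v k).re) +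
      (fun k => (v k).im) ⬝ᵥ (P *ᵥ fun k => (v k).im) := by
  simp only [dotProduct, mulVec, Matrix.map_apply, Pi.star_apply, Finset.mul_sum,
    Complex.re_sum, Complex.mul_re, Complex.ofReal_re, Complex.ofReal_im,
    RCLike.star_def, Complex.conj_re, Complex.conj_im, Complex.mul_im]
  rw [← Finset.sum_add_distrib]
  congr 1; ext k
  rw [← Finset.sum_add_distrib]
  congr 1; ext l
  ring

private lemma aux_pos {n : ℕ} {P : Matrix (Fin n) (Fin n) ℝ} (hP : P.PosDef)
    {v : Fin n → ℂ} (hv : v ≠ 0) :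
    0 < ((star v) ⬝ᵥ (P.map (Complex.ofReal ·)) *ᵥ v).re := by
  rw [aux_re]
  set a : Fin n → ℝ := fun k => (v k).re
  set b : Fin n → ℝ := fun k => (v k).im
  have hab : a ≠ 0 ∨ b ≠ 0 := by
    by_contra h
    push_neg at h
    apply hv
    funext k
    have ha := congrFun h.1 k
    have hb := congrFun h.2 k
    exact Complex.ext ha hb
  have hsa : ∀ x : Fin n → ℝ, star x ⬝ᵥ P *ᵥ x = x ⬝ᵥ P *ᵥ x := fun x => rfl
  rcases hab with h | h
  · have h1 := hP.dotProduct_mulVec_pos h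
    have h2 := hP.posSemidef.dotProduct_mulVec_nonneg b
    rw [hsa] at h1 h2
    linarith
  · have h1 := hP.posSemidef.dotProduct_mulVec_nonneg a
    have h2 := hP.dotProduct_mulVec_pos h
    rw [hsa] at h1 h2
    linarith

private lemma aux_smul_psd {n : ℕ} {M : Matrix (Fin n) (Fin n) ℝ} (hM : M.PosSemidef)
    {c : ℝ} (hc : 0 ≤ c) : (c • M).PosSemidef := by
  refine .of_dotProduct_mulVec_nonneg ?_ (fun x => ?_)
  · unfold Matrix.IsHermitian
    rw [conjTranspose_smul, hM.isHermitian]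
    simp
  · rw [smul_mulVec, dotProduct_smul, smul_eq_mul]
    exact mul_nonneg hc (hM.dotProduct_mulVec_nonneg x)

set_option maxHeartbeats 1000000 in
theorem stmt10 {n N : ℕ} (A : Fin N → Matrix (Fin n) (Fin n) ℝ)
    (γ : Fin N → Fin N → ℝ) (hγ : ∀ i j, i ≠ j → 0 ≤ γ i j)
    (X : Fin N → Matrix (Fin n) (Fin n) ℝ) (hX : ∀ i, (X i).PosDef)
    (hneg : ∀ i, (-(A i * X i + X i * (A i)ᵀ + ∑ j, γ i j • X j)).PosDef) :
    ∀ i, ∀ μ ∈ spectrum ℂ ((A i + (γ i i / 2) • (1 : Matrix (Fin n) (Fin n) ℝ)).map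
      (Complex.ofReal ·)), μ.re < 0 := by
  intro i μ hμ
  set B : Matrix (Fin n) (Fin n) ℝ := A i + (γ i i / 2) • 1 with hB
  set Y : Matrix (Fin n) (Fin n) ℝ := X i with hY
  -- the Lyapunov matrix for B
  set Q : Matrix (Fin n) (Fin n) ℝ := B * Y + Y * Bᵀ with hQ
  have hQeq : Q = A i * Y + Y * (A i)ᵀ + (γ i i) • Y := by
    rw [hQ, hB]
    rw [transpose_add, transpose_smul, transpose_one]
    rw [add_mul, mul_add, Matrix.smul_mul, one_mul, Matrix.mul_smul, mul_one]
    have : (γ i i / 2) • Y + (γ i i / 2) • Y = γ i i • Y := by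
      rw [← add_smul]; ring_nf
    rw [add_add_add_comm]
    rw [this]
  -- -Q is positive definite
  have hQneg : (-Q).PosDef := by
    have hsplit : (∑ j, γ i j • X j) = γ i i • Y + ∑ j ∈ Finset.univ.erase i, γ i j • X j := by
      rw [← Finset.sum_erase_add Finset.univ _ (Finset.mem_univ i), add_comm]
    have hS : (∑ j ∈ Finset.univ.erase i, γ i j • X j).PosSemidef := by
      apply Finset.sum_induction _ _ (fun M N hM hN => hM.add hN) Matrix.PosSemidef.zero
      intro j hj
      exact aux_smul_psd (hX j).posSemidef (hγ i j (Finset.ne_of_mem_erase hj).symm)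
    have : -Q = -(A i * Y + Y * (A i)ᵀ + ∑ j, γ i j • X j)
        + ∑ j ∈ Finset.univ.erase i, γ i j • X j := by
      rw [hQeq, hsplit]; abel
    rw [this]
    exact (hneg i).add_posSemidef hS
  -- complex versions
  set Bc : Matrix (Fin n) (Fin n) ℂ := B.map (Complex.ofReal ·) with hBc
  set Tc : Matrix (Fin n) (Fin n) ℂ := Bᵀ.map (Complex.ofReal ·) with hTc
  set Yc : Matrix (Fin n) (Fin n) ℂ := Y.map (Complex.ofReal ·) with hYc
  have hBcH : Bcᴴ = Tc := by
    ext k l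
    simp [hBc, hTc, conjTranspose_apply, Matrix.map_apply]
  have hTcH : Tcᴴ = Bc := by
    ext k l
    simp [hBc, hTc, conjTranspose_apply, Matrix.map_apply]
  -- obtain an eigenvector of Tc with eigenvalue conj μ
  have hdet : (Tc - (starRingEnd ℂ) μ • 1).det = 0 := by
    have h1 : ¬IsUnit ((algebraMap ℂ (Matrix (Fin n) (Fin n) ℂ)) μ - Bc) :=
      spectrum.mem_iff.mp hμ
    have h2 : ((algebraMap ℂ (Matrix (Fin n) (Fin n) ℂ)) μ - Bc).det = 0 := by
      by_contra h
      exact h1 ((Matrix.isUnit_iff_isUnit_det _).mpr (isUnit_iff_ne_zero.mpr h))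
    have h3 : Tc - (starRingEnd ℂ) μ • 1 = -((algebraMap ℂ (Matrix (Fin n) (Fin n) ℂ)) μ - Bc)ᴴ := by
      rw [conjTranspose_sub, hBcH]
      have : ((algebraMap ℂ (Matrix (Fin n) (Fin n) ℂ)) μ)ᴴ = (starRingEnd ℂ) μ • 1 := by
        rw [Algebra.algebraMap_eq_smul_one, conjTranspose_smul, conjTranspose_one]
        rfl
      rw [this]; abel
    rw [h3, det_neg, det_conjTranspose, h2]
    simp
  obtain ⟨v, hv, hvec⟩ := Matrix.exists_mulVec_eq_zero_iff.mpr hdet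
  have heig : Tc *ᵥ v = (starRingEnd ℂ) μ • v := by
    have := hvec
    rw [sub_mulVec, sub_eq_zero] at this
    rw [this, smul_mulVec, one_mulVec]
  -- the key identity
  set d : ℂ := star v ⬝ᵥ Yc *ᵥ v with hd
  have hQc : Q.map (Complex.ofReal ·) = Bc * Yc + Yc * Tc := by
    rw [hQ]
    have hmul : ∀ M N : Matrix (Fin n) (Fin n) ℝ,
        (M * N).map (Complex.ofReal ·) = M.map (Complex.ofReal ·) * N.map (Complex.ofReal ·) := by
      intro M N
      ext k l
      simp [Matrix.mul_apply, Matrix.map_apply]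
    rw [Matrix.map_add _ (fun a b => Complex.ofReal_add a b), hmul, hmul]
  have hkey : star v ⬝ᵥ (Q.map (Complex.ofReal ·)) *ᵥ v = (μ + (starRingEnd ℂ) μ) * d := by
    rw [hQc, add_mulVec, dotProduct_add, ← mulVec_mulVec, ← mulVec_mulVec]
    have h1 : star v ⬝ᵥ Bc *ᵥ (Yc *ᵥ v) = μ * d := by
      rw [dotProduct_mulVec]
      have : star v ᵥ* Bc = μ • star v := by
        rw [← hTcH, ← star_mulVec, heig, star_smul]
        simp
      rw [this, smul_dotProduct, smul_eq_mul, hd, dotProduct_mulVec]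
    have h2 : star v ⬝ᵥ Yc *ᵥ (Tc *ᵥ v) = (starRingEnd ℂ) μ * d := by
      rw [heig, mulVec_smul, dotProduct_smul, smul_eq_mul]
    rw [h1, h2]
    ring
  -- take real parts
  have hcre : (star v ⬝ᵥ (Q.map (Complex.ofReal ·)) *ᵥ v).re < 0 := by
    have := aux_pos hQneg hv
    have hmapneg : (-Q).map (Complex.ofReal ·) = -(Q.map (Complex.ofReal ·)) := by
      ext k l; simp [Matrix.map_apply]
    rw [hmapneg] at this
    have hrw : star v ⬝ᵥ (-(Q.map (Complex.ofReal ·))) *ᵥ v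
        = -(star v ⬝ᵥ (Q.map (Complex.ofReal ·)) *ᵥ v) := by
      rw [neg_mulVec, dotProduct_neg]
    rw [hrw] at this
    simp only [Complex.neg_re] at this
    linarith
  have hdre : 0 < d.re := aux_pos (hX i) hv
  have hmu : (μ + (starRingEnd ℂ) μ) = ((2 * μ.re : ℝ) : ℂ) := by
    apply Complex.ext <;> simp [Complex.add_re, Complex.add_im] <;> ring
  rw [hkey, hmu] at hcre
  rw [Complex.re_ofReal_mul] at hcre
  nlinarith
end
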